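/- Combining the previous facts: let I be an interval of length ≤ 2h, 0 < h ≤ 1, let û : I → ℝ be piecewise polynomial of degree ≤ p with a single interior breakpoint x₀, with derivative jumps J_l = û^{(l)}(x₀⁺) − û^{(l)}(x₀⁻) satisfying |J_l| ≤ 2D·h^{p+2-l(1+α)} (α = 1/p), and let P be the L²(I)-orthogonal projection onto polynomials of degree ≤ p on I. Then ‖P û − û‖_{L¹(I)} ≤ C·D·h^{p+2} for an absolute constant C (one may take C = 2√2·e). -/

import Mathlib

open MeasureTheory Polynomial


lemma poly_taylor_bound (p : ℕ) (hp : 1 ≤ p) (h D : ℝ) (hh : 0 < h) (hh1 : h ≤ 1) (hD : 0 ≤ D)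
    (q : Polynomial ℝ) (hdeg : q.degree ≤ (p : ℕ)) (x₀ : ℝ)
    (hJ : ∀ l ≤ p, |(derivative^[l] q).eval x₀| ≤ 2 * D * h ^ ((p : ℝ) + 2 - l * (1 + 1 / p)))
    (x : ℝ) (hx : |x - x₀| ≤ h) :
    |q.eval x| ≤ 2 * Real.exp 1 * D * h ^ ((p : ℝ) + 1) := by
  have hp0 : (0:ℝ) < p := by exact_mod_cast Nat.lt_of_lt_of_le Nat.zero_lt_one hp
  have hnd : (taylor x₀ q).natDegree < p + 1 := by
    rw [natDegree_taylor]
    exact Nat.lt_succ_of_le (natDegree_le_iff_degree_le.mpr hdeg)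
  have heval : q.eval x = ∑ i ∈ Finset.range (p + 1), (taylor x₀ q).coeff i * (x - x₀) ^ i := by
    have : q.eval x = (taylor x₀ q).eval (x - x₀) := by
      rw [taylor_apply, eval_comp]; simp
    rw [this, eval_eq_sum_range' hnd]
  rw [heval]
  calc |∑ i ∈ Finset.range (p + 1), (taylor x₀ q).coeff i * (x - x₀) ^ i|
      ≤ ∑ i ∈ Finset.range (p + 1), |(taylor x₀ q).coeff i * (x - x₀) ^ i| :=
        Finset.abs_sum_le_sum_abs _ _
    _ ≤ ∑ i ∈ Finset.range (p + 1), (2 * D * h ^ ((p : ℝ) + 1)) * ((1:ℝ) ^ i / (Nat.factorial i : ℝ)) := by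
        apply Finset.sum_le_sum
        intro i hi
        have hip : i ≤ p := Nat.lt_succ_iff.mp (Finset.mem_range.mp hi)
        have hfac : (0:ℝ) < (Nat.factorial i : ℝ) := by positivity
        have hcoeff : (taylor x₀ q).coeff i = (derivative^[i] q).eval x₀ / (Nat.factorial i : ℝ) := by
          rw [taylor_coeff]
          have := congrFun (factorial_smul_hasseDeriv (R := ℝ) (k := i)) q
          simp only [LinearMap.smul_apply] at this
          rw [← this]
          simp [nsmul_eq_mul]
          field_simp
        have h1 : |(taylor x₀ q).coeff i| ≤ 2 * D * h ^ ((p : ℝ) + 2 - i * (1 + 1 / p)) / (Nat.factorial i : ℝ) := by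
          rw [hcoeff, abs_div, abs_of_pos hfac]
          gcongr
          exact hJ i hip
        have h2 : |(x - x₀) ^ i| ≤ h ^ i := by
          rw [abs_pow]; exact pow_le_pow_left₀ (abs_nonneg _) hx i
        have h3 : h ^ ((p : ℝ) + 2 - i * (1 + 1 / p)) * h ^ i ≤ h ^ ((p : ℝ) + 1) := by
          rw [← Real.rpow_natCast h i, ← Real.rpow_add hh]
          apply Real.rpow_le_rpow_of_exponent_ge hh hh1
          have hi1 : (i : ℝ) / p ≤ 1 := div_le_one_of_le₀ (Nat.cast_le.mpr hip) hp0.le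
          have : (i:ℝ) * (1 + 1/p) = i + i/p := by field_simp
          rw [this]
          linarith
        calc |(taylor x₀ q).coeff i * (x - x₀) ^ i|
            = |(taylor x₀ q).coeff i| * |(x - x₀) ^ i| := abs_mul _ _
          _ ≤ (2 * D * h ^ ((p : ℝ) + 2 - i * (1 + 1 / p)) / (Nat.factorial i : ℝ)) * h ^ i := by
              apply mul_le_mul h1 h2 (abs_nonneg _)
              positivity
          _ = 2 * D * (h ^ ((p : ℝ) + 2 - i * (1 + 1 / p)) * h ^ i) / (Nat.factorial i : ℝ) := by ring
          _ ≤ 2 * D * h ^ ((p : ℝ) + 1) / (Nat.factorial i : ℝ) := by gcongr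
          _ = 2 * D * h ^ ((p : ℝ) + 1) * ((1:ℝ) ^ i / (Nat.factorial i : ℝ)) := by rw [one_pow]; ring
    _ = 2 * D * h ^ ((p : ℝ) + 1) * ∑ i ∈ Finset.range (p + 1), ((1:ℝ) ^ i / (Nat.factorial i : ℝ)) := by
        rw [Finset.mul_sum]
    _ ≤ 2 * D * h ^ ((p : ℝ) + 1) * Real.exp 1 := by
        apply mul_le_mul_of_nonneg_left (Real.sum_le_exp_of_nonneg zero_le_one _)
        positivity
    _ = 2 * Real.exp 1 * D * h ^ ((p : ℝ) + 1) := by ring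


lemma aux_proj (a b h K : ℝ) (hh : 0 < h) (hK : 0 ≤ K) (hab : a < b) (hlen : b - a ≤ 2 * h)
    (uhat : ℝ → ℝ) (p : ℕ)
    (r v q : Polynomial ℝ) (hdegr : r.degree ≤ (p : ℕ)) (hdegv : v.degree ≤ (p : ℕ))
    (T : Set ℝ) (hTm : MeasurableSet T) (hTsub : T ⊆ Set.Ioo a b)
    (hTvol : volume T ≤ ENNReal.ofReal h)
    (hq : ∀ x ∈ Set.Ioo a b, uhat x - v.eval x = T.indicator (fun y => q.eval y) x)
    (hqbd : ∀ x ∈ T, |q.eval x| ≤ K)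
    (horth : ∀ s : Polynomial ℝ, s.degree ≤ (p : ℕ) →
      ∫ x in Set.Ioo a b, (uhat x - r.eval x) * s.eval x = 0) :
    ∫ x in Set.Ioo a b, |r.eval x - uhat x| ≤ Real.sqrt 2 * K * h := by
  set S : Set ℝ := Set.Ioo a b with hS
  have hSm : MeasurableSet S := measurableSet_Ioo
  set μ : Measure ℝ := volume.restrict S with hμ
  -- basic integrability of polynomials on S
  have hpoly : ∀ u : Polynomial ℝ, Integrable (fun x => u.eval x) μ := by
    intro u
    exact (u.continuous.integrableOn_Icc).mono_set Set.Ioo_subset_Icc_self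
  have hind : ∀ u : Polynomial ℝ, Integrable (T.indicator (fun y => u.eval y)) μ := fun u =>
    (hpoly u).indicator hTm
  set w : ℝ → ℝ := T.indicator (fun y => q.eval y) with hw_def
  set s1 : Polynomial ℝ := r - v with hs1_def
  set g : ℝ → ℝ := fun x => w x - s1.eval x with hg_def
  have hmul : ∀ (u : Polynomial ℝ) (x : ℝ),
      w x * u.eval x = T.indicator (fun y => (q * u).eval y) x := by
    intro u x
    by_cases hx : x ∈ T <;> simp [hw_def, Set.indicator_of_mem, Set.indicator_of_notMem, hx]
  have hwsq : ∀ x, w x ^ 2 = T.indicator (fun y => (q * q).eval y) x := by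
    intro x
    rw [sq]
    by_cases hx : x ∈ T <;> simp [hw_def, Set.indicator_of_mem, Set.indicator_of_notMem, hx]
  -- measurability
  have hw_meas : Measurable w := (q.continuous.measurable).indicator hTm
  have hg_meas : Measurable g := hw_meas.sub (s1.continuous.measurable)
  have hw_int : Integrable w μ := hind q
  have hg_int : Integrable g μ := hw_int.sub (hpoly s1)
  have hwsq_int : Integrable (fun x => w x ^ 2) μ := by
    rw [show (fun x => w x ^ 2) = T.indicator (fun y => (q * q).eval y) from funext hwsq]
    exact hind (q * q)
  have hgsq_eq : ∀ x, g x ^ 2 = T.indicator (fun y => (q * q).eval y) x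
      - 2 * T.indicator (fun y => (q * s1).eval y) x + s1.eval x ^ 2 := by
    intro x
    have h1 := hmul s1 x
    have h2 := hwsq x
    simp only [hg_def]
    nlinarith [h1, h2]
  have hgsq_int : Integrable (fun x => g x ^ 2) μ := by
    rw [show (fun x => g x ^ 2) = fun x => T.indicator (fun y => (q * q).eval y) x
      - 2 * T.indicator (fun y => (q * s1).eval y) x + s1.eval x ^ 2 from funext hgsq_eq]
    refine ((hind (q * q)).sub ((hind (q * s1)).const_mul 2)).add ?_
    have := hpoly (s1 * s1)
    simpa [sq, Polynomial.eval_mul] using this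
  have hgs1_int : Integrable (fun x => g x * s1.eval x) μ := by
    have : (fun x => g x * s1.eval x)
        = fun x => T.indicator (fun y => (q * s1).eval y) x - (s1 * s1).eval x := by
      funext x
      simp only [hg_def, sub_mul, hmul s1 x, Polynomial.eval_mul]
    rw [this]
    exact (hind (q * s1)).sub (hpoly (s1 * s1))
  have hs1sq_int : Integrable (fun x => s1.eval x ^ 2) μ := by
    have := hpoly (s1 * s1)
    simpa [sq, Polynomial.eval_mul] using this
  -- uhat = v + w on S
  have huf : ∀ x ∈ S, uhat x - r.eval x = g x := by
    intro x hx
    have := hq x hx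
    simp only [hg_def, hs1_def, Polynomial.eval_sub, hw_def]
    linarith [this]
  -- orthogonality in terms of g
  have horth' : ∫ x, g x * s1.eval x ∂μ = 0 := by
    rw [← horth s1 (le_trans (Polynomial.degree_sub_le r v) (max_le hdegr hdegv))]
    exact setIntegral_congr_fun hSm fun x hx => by rw [huf x hx]
  -- Pythagoras: ∫ g² ≤ ∫ w²
  have hsplit : ∫ x, w x ^ 2 ∂μ
      = (∫ x, g x ^ 2 ∂μ) + 2 * (∫ x, g x * s1.eval x ∂μ) + ∫ x, s1.eval x ^ 2 ∂μ := by
    have hpt : ∀ x, w x ^ 2 = g x ^ 2 + 2 * (g x * s1.eval x) + s1.eval x ^ 2 := by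
      intro x; simp only [hg_def]; ring
    calc ∫ x, w x ^ 2 ∂μ
        = ∫ x, (g x ^ 2 + 2 * (g x * s1.eval x) + s1.eval x ^ 2) ∂μ := by
          exact integral_congr_ae (Filter.Eventually.of_forall hpt)
      _ = (∫ x, g x ^ 2 ∂μ) + 2 * (∫ x, g x * s1.eval x ∂μ) + ∫ x, s1.eval x ^ 2 ∂μ := by
          have i1 : Integrable (fun x => g x ^ 2 + 2 * (g x * s1.eval x)) μ :=
            hgsq_int.add (hgs1_int.const_mul 2)
          rw [integral_add i1 hs1sq_int, integral_add hgsq_int (hgs1_int.const_mul 2),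
            integral_const_mul]
  have hIW : ∫ x, g x ^ 2 ∂μ ≤ ∫ x, w x ^ 2 ∂μ := by
    have hnn : 0 ≤ ∫ x, s1.eval x ^ 2 ∂μ := integral_nonneg fun x => sq_nonneg _
    rw [hsplit, horth']
    linarith
  -- ∫ w² ≤ K² h
  have hW : ∫ x, w x ^ 2 ∂μ ≤ K ^ 2 * h := by
    rw [show (fun x => w x ^ 2) = T.indicator (fun y => (q * q).eval y) from funext hwsq]
    rw [hμ, setIntegral_indicator hTm, Set.inter_eq_self_of_subset_right hTsub]
    calc ∫ x in T, (q * q).eval x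
        ≤ ∫ _x in T, K ^ 2 := by
          apply setIntegral_mono_on
          · exact ((hpoly (q * q)).mono_measure (Measure.restrict_mono hTsub le_rfl))
          · exact integrableOn_const (lt_of_le_of_lt hTvol ENNReal.ofReal_lt_top).ne
          · exact hTm
          · intro x hx
            have := hqbd x hx
            rw [Polynomial.eval_mul, ← sq]
            calc q.eval x ^ 2 = |q.eval x| ^ 2 := (sq_abs _).symm
              _ ≤ K ^ 2 := pow_le_pow_left₀ (abs_nonneg _) this 2
      _ = (volume T).toReal * K ^ 2 := by rw [setIntegral_const, smul_eq_mul, measureReal_def]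
      _ ≤ h * K ^ 2 := by
          gcongr
          exact ENNReal.toReal_le_of_le_ofReal hh.le hTvol
      _ = K ^ 2 * h := mul_comm _ _
  -- Cauchy-Schwarz
  have hvolS : (volume S).toReal ≤ 2 * h := by
    rw [hS, Real.volume_Ioo, ENNReal.toReal_ofReal (by linarith)]
    linarith
  have hCS : ∫ x, |g x| ∂μ ≤ (∫ x, g x ^ 2 ∂μ) ^ (1/2 : ℝ) * (2 * h) ^ (1/2 : ℝ) := by
    have hconj : Real.HolderConjugate 2 2 := Real.holderConjugate_iff.mpr ⟨one_lt_two, by norm_num⟩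
    have hg_mem : MemLp (fun x => |g x|) (ENNReal.ofReal 2) μ := by
      rw [show ENNReal.ofReal 2 = 2 by norm_num]
      refine (memLp_two_iff_integrable_sq (hg_meas.abs.aestronglyMeasurable)).mpr ?_
      simpa [sq_abs] using hgsq_int
    have h1_mem : MemLp (fun _ : ℝ => (1 : ℝ)) (ENNReal.ofReal 2) μ := memLp_const 1
    have key := integral_mul_le_Lp_mul_Lq_of_nonneg hconj
      (Filter.Eventually.of_forall fun x => abs_nonneg (g x))
      (Filter.Eventually.of_forall fun _ => zero_le_one) hg_mem h1_mem
    simp only [mul_one] at key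
    have e2 : ∫ x, |g x| ^ (2:ℝ) ∂μ = ∫ x, g x ^ 2 ∂μ := by
      refine integral_congr_ae (Filter.Eventually.of_forall fun x => ?_)
      show |g x| ^ (2:ℝ) = g x ^ 2
      rw [show ((2:ℝ)) = ((2:ℕ):ℝ) by norm_num, Real.rpow_natCast, sq_abs]
    have e3 : ∫ _x, (1:ℝ) ^ (2:ℝ) ∂μ = (volume S).toReal := by
      simp [Real.one_rpow, hμ, Measure.restrict_apply_univ, measureReal_def]
    rw [e2, e3] at key
    refine key.trans ?_
    gcongr
    all_goals first
      | exact hvolS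
      | exact Real.rpow_nonneg (integral_nonneg fun x => sq_nonneg _) _
  -- conclude
  have hgoal : ∫ x, |r.eval x - uhat x| ∂μ = ∫ x, |g x| ∂μ := by
    refine setIntegral_congr_fun hSm fun x hx => ?_
    rw [abs_sub_comm, huf x hx]
  rw [hgoal]
  refine hCS.trans ?_
  have h1 : (∫ x, g x ^ 2 ∂μ) ^ (1/2:ℝ) ≤ (K ^ 2 * h) ^ (1/2:ℝ) :=
    Real.rpow_le_rpow (integral_nonneg fun x => sq_nonneg _) (hIW.trans hW) (by norm_num)
  calc (∫ x, g x ^ 2 ∂μ) ^ (1/2 : ℝ) * (2 * h) ^ (1/2 : ℝ)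
      ≤ (K ^ 2 * h) ^ (1/2:ℝ) * (2 * h) ^ (1/2 : ℝ) := by
        gcongr
        all_goals first
          | exact h1
          | exact Real.rpow_nonneg (by positivity) _
    _ = Real.sqrt (K ^ 2 * h) * Real.sqrt (2 * h) := by
        rw [← Real.sqrt_eq_rpow, ← Real.sqrt_eq_rpow]
    _ = Real.sqrt ((K ^ 2 * h) * (2 * h)) := (Real.sqrt_mul (by positivity) _).symm
    _ = Real.sqrt (2 * (K * h) ^ 2) := by ring_nf
    _ = Real.sqrt 2 * (K * h) := by
        rw [Real.sqrt_mul (by norm_num), Real.sqrt_sq (by positivity)]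
    _ = Real.sqrt 2 * K * h := by ring


/-- Lemma 5.8: the L¹ error of the L² projection of a piecewise polynomial with
numerically smooth derivative jumps onto polynomials of degree ≤ p is of order `h^(p+2)`.
The projection is characterized by its orthogonality property. -/
theorem projection_error_special_cell (p : ℕ) (hp : 1 ≤ p) (a b x₀ h D : ℝ)
    (hh : 0 < h) (hh1 : h ≤ 1) (hD : 0 ≤ D)
    (hab : a < b) (hlen : b - a ≤ 2 * h) (hax : a < x₀) (hxb : x₀ < b)
    (uhat : ℝ → ℝ) (qL qR : Polynomial ℝ)
    (hdegL : qL.degree ≤ (p : ℕ)) (hdegR : qR.degree ≤ (p : ℕ))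
    (huL : ∀ x ∈ Set.Ioo a b, x < x₀ → uhat x = qL.eval x)
    (huR : ∀ x ∈ Set.Ioo a b, x₀ ≤ x → uhat x = qR.eval x)
    (hJ : ∀ l ≤ p,
      |(derivative^[l] qR).eval x₀ - (derivative^[l] qL).eval x₀| ≤
        2 * D * h ^ ((p : ℝ) + 2 - l * (1 + 1 / p)))
    -- r is the L²(a,b)-orthogonal projection of uhat onto polynomials of degree ≤ p
    (r : Polynomial ℝ) (hdegr : r.degree ≤ (p : ℕ))
    (horth : ∀ s : Polynomial ℝ, s.degree ≤ (p : ℕ) →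
      ∫ x in Set.Ioo a b, (uhat x - r.eval x) * s.eval x = 0) :
    ∫ x in Set.Ioo a b, |r.eval x - uhat x| ≤
      2 * Real.sqrt 2 * Real.exp 1 * D * h ^ (p + 2) := by
  set K : ℝ := 2 * Real.exp 1 * D * h ^ ((p : ℝ) + 1) with hK_def
  have hK : 0 ≤ K := by
    have : (0:ℝ) < h ^ ((p : ℝ) + 1) := Real.rpow_pos_of_pos hh _
    positivity
  have hfin : Real.sqrt 2 * K * h = 2 * Real.sqrt 2 * Real.exp 1 * D * h ^ (p + 2) := by
    rw [hK_def, show ((p:ℝ)+1) = ((p+1:ℕ):ℝ) by push_cast; ring, Real.rpow_natCast,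
      show p + 2 = (p + 1) + 1 from rfl, pow_succ]
    ring
  rw [← hfin]
  by_cases hside : x₀ - a ≤ h
  · -- left side short: v = qR, q = qL - qR, T = Ioo a x₀
    apply aux_proj a b h K hh hK hab hlen uhat p r qR (qL - qR) hdegr hdegR
      (Set.Ioo a x₀) measurableSet_Ioo (Set.Ioo_subset_Ioo le_rfl hxb.le)
      (by rw [Real.volume_Ioo]; exact ENNReal.ofReal_le_ofReal hside)
      ?_ ?_ horth
    · intro x hx
      by_cases hxx : x < x₀
      · rw [huL x hx hxx, Set.indicator_of_mem (Set.mem_Ioo.mpr ⟨hx.1, hxx⟩)]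
        simp
      · rw [huR x hx (not_lt.mp hxx), Set.indicator_of_notMem (fun hmem => hxx hmem.2)]
        simp
    · intro x hx
      apply poly_taylor_bound p hp h D hh hh1 hD (qL - qR)
        (le_trans (Polynomial.degree_sub_le qL qR) (max_le hdegL hdegR)) x₀
      · intro l hl
        rw [Polynomial.iterate_derivative_sub, Polynomial.eval_sub, abs_sub_comm]
        exact hJ l hl
      · rw [abs_sub_comm, abs_of_nonneg (by linarith [hx.2] : (0:ℝ) ≤ x₀ - x)]
        linarith [hx.1]
  · -- right side short: v = qL, q = qR - qL, T = Ico x₀ b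
    have hside2 : b - x₀ ≤ h := by linarith
    apply aux_proj a b h K hh hK hab hlen uhat p r qL (qR - qL) hdegr hdegL
      (Set.Ico x₀ b) measurableSet_Ico (fun x hx => ⟨lt_of_lt_of_le hax hx.1, hx.2⟩)
      (by rw [Real.volume_Ico]; exact ENNReal.ofReal_le_ofReal hside2)
      ?_ ?_ horth
    · intro x hx
      by_cases hxx : x₀ ≤ x
      · rw [huR x hx hxx, Set.indicator_of_mem (Set.mem_Ico.mpr ⟨hxx, hx.2⟩)]
        simp
      · rw [huL x hx (not_le.mp hxx), Set.indicator_of_notMem (fun hmem => hxx hmem.1)]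
        simp
    · intro x hx
      apply poly_taylor_bound p hp h D hh hh1 hD (qR - qL)
        (le_trans (Polynomial.degree_sub_le qR qL) (max_le hdegR hdegL)) x₀
      · intro l hl
        rw [Polynomial.iterate_derivative_sub, Polynomial.eval_sub]
        exact hJ l hl
      · rw [abs_of_nonneg (by linarith [hx.1] : (0:ℝ) ≤ x - x₀)]
        linarith [hx.2]
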